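/- On the open book, suppose m_k = ∫ z⁰ (Q∘f_k⁻¹)(dz) < 0 for every k = 1,…,K. Then the Fréchet mean of Q exists, is unique, and lies on the spine: μ = (0, μ_{1D}) where μ_{1D} = ∫ z_{1D} Q̃(dz). -/

import Mathlib

open MeasureTheory

/-- The open-book distance on `K` copies of the half-space `H = [0,∞) × ℝ^D`. -/
noncomputable def obDist {K D : ℕ} (p q : Fin K × ℝ × EuclideanSpace ℝ (Fin D)) : ℝ :=
  Real.sqrt ((if p.1 = q.1 then (p.2.1 - q.2.1) ^ 2 else (p.2.1 + q.2.1) ^ 2)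
    + ‖p.2.2 - q.2.2‖ ^ 2)

/-- On the open book, if the folded first-coordinate means satisfy `m_k < 0`
for every leaf `k`, then the Fréchet mean of `Q` exists, is unique, and is the spine point
`(0, μ_{1D})`: a point of the open book is a minimizer of the Fréchet function iff its zeroth
coordinate is `0` and its last `D` coordinates equal `μ_{1D} = ∫ z_{1D} dQ̃`. -/
theorem stmt7 {K D : ℕ}
    (Q : Measure (Fin K × ℝ × EuclideanSpace ℝ (Fin D))) [IsProbabilityMeasure Q]
    (hae : ∀ᵐ z ∂Q, 0 ≤ z.2.1)
    (h0sq : Integrable (fun z => z.2.1 ^ 2) Q)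
    (h0 : Integrable (fun z => z.2.1) Q)
    (h1sq : Integrable (fun z => ‖z.2.2‖ ^ 2) Q)
    (h1 : Integrable (fun z => z.2.2) Q)
    (m : Fin K → ℝ)
    (hm : ∀ k, m k = ∫ z, (if z.1 = k then z.2.1 else -z.2.1) ∂Q)
    (hneg : ∀ k, m k < 0)
    (μ1D : EuclideanSpace ℝ (Fin D)) (hμ : μ1D = ∫ z, z.2.2 ∂Q) :
    ∀ p : Fin K × ℝ × EuclideanSpace ℝ (Fin D), 0 ≤ p.2.1 →
      ((∀ q : Fin K × ℝ × EuclideanSpace ℝ (Fin D), 0 ≤ q.2.1 →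
          ∫ z, obDist p z ^ 2 ∂Q ≤ ∫ z, obDist q z ^ 2 ∂Q)
        ↔ (p.2.1 = 0 ∧ p.2.2 = μ1D)) := by
  set C : ℝ := (∫ z, z.2.1 ^ 2 ∂Q) + (∫ z, ‖z.2.2‖ ^ 2 ∂Q) - ‖μ1D‖ ^ 2 with hC
  have key : ∀ p : Fin K × ℝ × EuclideanSpace ℝ (Fin D),
      ∫ z, obDist p z ^ 2 ∂Q
        = p.2.1 ^ 2 - 2 * p.2.1 * m p.1 + ‖p.2.2 - μ1D‖ ^ 2 + C := by
    intro p
    have hsmeas : Measurable fun z : Fin K × ℝ × EuclideanSpace ℝ (Fin D) =>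
        (if z.1 = p.1 then z.2.1 else -z.2.1) := by
      apply Measurable.ite (measurable_fst (measurableSet_singleton p.1))
      · exact measurable_snd.fst
      · exact measurable_snd.fst.neg
    have hs : Integrable (fun z : Fin K × ℝ × EuclideanSpace ℝ (Fin D) =>
        (if z.1 = p.1 then z.2.1 else -z.2.1)) Q := by
      refine h0.mono hsmeas.aestronglyMeasurable ?_
      filter_upwards with z
      by_cases h : z.1 = p.1 <;> simp [h]
    have hin : Integrable (fun z : Fin K × ℝ × EuclideanSpace ℝ (Fin D) =>
        (inner ℝ p.2.2 z.2.2 : ℝ)) Q := h1.const_inner p.2.2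
    have hpt : ∀ z : Fin K × ℝ × EuclideanSpace ℝ (Fin D), obDist p z ^ 2 =
        (p.2.1 ^ 2 - 2 * p.2.1 * (if z.1 = p.1 then z.2.1 else -z.2.1) + z.2.1 ^ 2)
        + (‖p.2.2‖ ^ 2 - 2 * (inner ℝ p.2.2 z.2.2 : ℝ) + ‖z.2.2‖ ^ 2) := by
      intro z
      have hnn : (0:ℝ) ≤ (if p.1 = z.1 then (p.2.1 - z.2.1) ^ 2 else (p.2.1 + z.2.1) ^ 2)
          + ‖p.2.2 - z.2.2‖ ^ 2 := by
        have : (0:ℝ) ≤ (if p.1 = z.1 then (p.2.1 - z.2.1) ^ 2 else (p.2.1 + z.2.1) ^ 2) := by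
          split <;> positivity
        positivity
      rw [obDist, Real.sq_sqrt hnn, norm_sub_sq_real]
      by_cases h : p.1 = z.1
      · simp only [if_pos h, if_pos h.symm]; ring
      · simp only [if_neg h, if_neg (Ne.symm h)]; ring
    simp only [hpt]
    have iA2 : Integrable (fun z : Fin K × ℝ × EuclideanSpace ℝ (Fin D) =>
        2 * p.2.1 * (if z.1 = p.1 then z.2.1 else -z.2.1)) Q := hs.const_mul (2 * p.2.1)
    have iA1 : Integrable (fun z : Fin K × ℝ × EuclideanSpace ℝ (Fin D) =>
        p.2.1 ^ 2 - 2 * p.2.1 * (if z.1 = p.1 then z.2.1 else -z.2.1)) Q :=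
      (integrable_const _).sub iA2
    have iA : Integrable (fun z : Fin K × ℝ × EuclideanSpace ℝ (Fin D) =>
        p.2.1 ^ 2 - 2 * p.2.1 * (if z.1 = p.1 then z.2.1 else -z.2.1) + z.2.1 ^ 2) Q :=
      iA1.add h0sq
    have iB2 : Integrable (fun z : Fin K × ℝ × EuclideanSpace ℝ (Fin D) =>
        2 * (inner ℝ p.2.2 z.2.2 : ℝ)) Q := hin.const_mul 2
    have iB1 : Integrable (fun z : Fin K × ℝ × EuclideanSpace ℝ (Fin D) =>
        ‖p.2.2‖ ^ 2 - 2 * (inner ℝ p.2.2 z.2.2 : ℝ)) Q := (integrable_const _).sub iB2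
    have iB : Integrable (fun z : Fin K × ℝ × EuclideanSpace ℝ (Fin D) =>
        ‖p.2.2‖ ^ 2 - 2 * (inner ℝ p.2.2 z.2.2 : ℝ) + ‖z.2.2‖ ^ 2) Q := iB1.add h1sq
    rw [integral_add iA iB, integral_add iA1 h0sq, integral_sub (integrable_const _) iA2,
      integral_add iB1 h1sq, integral_sub (integrable_const _) iB2]
    simp only [integral_const, probReal_univ, one_smul]
    rw [integral_const_mul, integral_const_mul, integral_inner h1,
      ← hμ, ← hm p.1, hC, norm_sub_sq_real]
    ring
  intro p hp
  constructor
  · intro hmin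
    have h1' := hmin (p.1, 0, μ1D) le_rfl
    rw [key p, key (p.1, 0, μ1D)] at h1'
    simp only [sub_self, norm_zero] at h1'
    have h1'' : p.2.1 ^ 2 - 2 * p.2.1 * m p.1 + ‖p.2.2 - μ1D‖ ^ 2 ≤ 0 := by nlinarith
    have hg1 : 0 ≤ p.2.1 ^ 2 - 2 * p.2.1 * m p.1 := by nlinarith [hneg p.1]
    have hg2 : (0:ℝ) ≤ ‖p.2.2 - μ1D‖ ^ 2 := by positivity
    constructor
    · by_contra h
      have hlt : 0 < p.2.1 := lt_of_le_of_ne hp (Ne.symm h)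
      nlinarith [hneg p.1, mul_pos hlt hlt, mul_pos hlt (neg_pos.mpr (hneg p.1))]
    · have : ‖p.2.2 - μ1D‖ ^ 2 = 0 := le_antisymm (by nlinarith) hg2
      have := pow_eq_zero_iff (n := 2) (by norm_num) |>.mp this
      rwa [norm_eq_zero, sub_eq_zero] at this
  · rintro ⟨h01, h02⟩ q hq
    rw [key p, key q, h01, h02, sub_self, norm_zero]
    have hg1 : 0 ≤ q.2.1 ^ 2 - 2 * q.2.1 * m q.1 := by nlinarith [hneg q.1]
    have hg2 : (0:ℝ) ≤ ‖q.2.2 - μ1D‖ ^ 2 := by positivity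
    nlinarith
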